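/- Automatic a.s. sequential continuity: Let G be a nonempty, 𝒯_{ε,λ}-closed, L⁰-convex subset of L⁰(𝓕,ℝ^d) and T : G → L⁰(𝓕,ℝ^d) a σ-stable map that is continuous in probability. Then T is a.s. sequentially continuous: for every x ∈ G and every sequence (x_n) in G with |x_n⁰(ω) − x⁰(ω)| → 0 for a.e. ω, one has |(T(x_n))⁰(ω) − (T(x))⁰(ω)| → 0 for a.e. ω. -/
import Mathlib


open MeasureTheory Filter Set Topology

noncomputable section

namespace RandomBrouwer

variable {Ω : Type*} [MeasurableSpace Ω]

/-- `ℝ^d` with the Euclidean norm. -/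
abbrev Ed (d : ℕ) : Type := EuclideanSpace ℝ (Fin d)

/-- `L⁰(𝓕,ℝ^d)`: equivalence classes (mod a.e. equality) of measurable functions `Ω → ℝ^d`. -/
abbrev L0 (μ : Measure Ω) (d : ℕ) : Type _ := Ω →ₘ[μ] Ed d

/-- A countable measurable partition of `Ω`. -/
def IsPartition (A : ℕ → Set Ω) : Prop :=
  (∀ n, MeasurableSet (A n)) ∧ (Pairwise fun m n => Disjoint (A m) (A n)) ∧ (⋃ n, A n) = univ

/-- A finite measurable partition of `Ω`. -/
def IsFinPartition {m : ℕ} (A : Fin m → Set Ω) : Prop :=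
  (∀ i, MeasurableSet (A i)) ∧ (Pairwise fun i j => Disjoint (A i) (A j)) ∧ (⋃ i, A i) = univ

variable (μ : Measure Ω) (d : ℕ)

/-- `z = ∑ₙ 1_{A n} (v n)`: `z` is the countable concatenation of the sequence `v`
along the countable measurable partition `A`. -/
def IsConcat {β : Type*} [TopologicalSpace β] (A : ℕ → Set Ω) (v : ℕ → Ω →ₘ[μ] β)
    (z : Ω →ₘ[μ] β) : Prop :=
  ∀ n, ∀ᵐ ω ∂μ, ω ∈ A n → z ω = v n ω

/-- `z = ∑ᵢ 1_{A i} (v i)` for a finite partition. -/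
def IsFinConcat {β : Type*} [TopologicalSpace β] {m : ℕ} (A : Fin m → Set Ω)
    (v : Fin m → Ω →ₘ[μ] β) (z : Ω →ₘ[μ] β) : Prop :=
  ∀ i, ∀ᵐ ω ∂μ, ω ∈ A i → z ω = v i ω

/-- A σ-stable subset of `L⁰(𝓕,ℝ^d)`. -/
def SigmaStable (G : Set (L0 μ d)) : Prop :=
  ∀ A : ℕ → Set Ω, IsPartition A → ∀ v : ℕ → L0 μ d, (∀ n, v n ∈ G) →
    ∀ z : L0 μ d, IsConcat μ A v z → z ∈ G

/-- A σ-stable map on `G` (with values classes of `β`-valued functions). -/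
def SigmaStableMapOn {β : Type*} [TopologicalSpace β] (G : Set (L0 μ d))
    (f : L0 μ d → (Ω →ₘ[μ] β)) : Prop :=
  ∀ A : ℕ → Set Ω, IsPartition A → ∀ v : ℕ → L0 μ d, (∀ n, v n ∈ G) →
    ∀ z ∈ G, IsConcat μ A v z → IsConcat μ A (fun n => f (v n)) (f z)

/-- A local map on `G`. -/
def LocalOn (G : Set (L0 μ d)) (h : L0 μ d → L0 μ d) : Prop :=
  ∀ x ∈ G, ∀ y ∈ G, ∀ A : Set Ω, MeasurableSet A →
    (∀ᵐ ω ∂μ, ω ∈ A → x ω = y ω) → ∀ᵐ ω ∂μ, ω ∈ A → h x ω = h y ω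

/-- `G` is L⁰-convex. -/
def L0Convex (G : Set (L0 μ d)) : Prop :=
  ∀ x ∈ G, ∀ y ∈ G, ∀ lam : Ω → ℝ, Measurable lam → (∀ ω, lam ω ∈ Icc (0:ℝ) 1) →
    ∀ z : L0 μ d, (∀ᵐ ω ∂μ, z ω = lam ω • x ω + (1 - lam ω) • y ω) → z ∈ G

/-- `G` is a.s. bounded. -/
def ASBounded (G : Set (L0 μ d)) : Prop :=
  ∃ r : Ω → ℝ, Measurable r ∧ (∀ ω, 0 ≤ r ω) ∧ ∀ x ∈ G, ∀ᵐ ω ∂μ, ‖x ω‖ ≤ r ω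

/-- `G` is `𝒯_{ε,λ}`-closed, i.e. sequentially closed under convergence in probability. -/
def TelClosed (G : Set (L0 μ d)) : Prop :=
  ∀ x : ℕ → L0 μ d, (∀ n, x n ∈ G) → ∀ z : L0 μ d,
    TendstoInMeasure μ (fun n => ⇑(x n)) atTop ⇑z → z ∈ G

/-- `f` is continuous in probability (`𝒯_{ε,λ}`-continuous) on `G`. -/
def ContInProbOn (G : Set (L0 μ d)) (f : L0 μ d → L0 μ d) : Prop :=
  ∀ x : ℕ → L0 μ d, (∀ n, x n ∈ G) → ∀ z ∈ G,
    TendstoInMeasure μ (fun n => ⇑(x n)) atTop ⇑z →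
    TendstoInMeasure μ (fun n => ⇑(f (x n))) atTop ⇑(f z)

/-- `y` is a random subsequence of `v`. -/
def IsRandomSubseq (v : ℕ → L0 μ d) (y : ℕ → L0 μ d) : Prop :=
  ∃ nk : ℕ → Ω → ℕ, (∀ k, Measurable (nk k)) ∧ (∀ k ω, nk k ω < nk (k + 1) ω) ∧
    ∀ k, ∀ᵐ ω ∂μ, y k ω = v (nk k ω) ω

/-- `f` is random sequentially continuous on the σ-stable set `G`. -/
def RandSeqContOn (G : Set (L0 μ d)) (f : L0 μ d → L0 μ d) : Prop :=
  ∀ v : ℕ → L0 μ d, (∀ k, v k ∈ G) → ∀ z ∈ G,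
    TendstoInMeasure μ (fun k => ⇑(v k)) atTop ⇑z →
    ∃ y : ℕ → L0 μ d, (∀ k, y k ∈ G) ∧ IsRandomSubseq μ d v y ∧
      TendstoInMeasure μ (fun k => ⇑(f (y k))) atTop ⇑(f z)

/-- The locally L⁰-convex topology `𝒯_c` on `L⁰(𝓕,ℝ^d)`, generated by random open balls. -/
def Tc : TopologicalSpace (L0 μ d) :=
  .generateFrom {B | ∃ (x : L0 μ d) (r : Ω → ℝ), Measurable r ∧ (∀ᵐ ω ∂μ, 0 < r ω) ∧
    B = {y : L0 μ d | ∀ᵐ ω ∂μ, ‖x ω - y ω‖ < r ω}}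

/-- The L⁰-convex hull `Conv_{L⁰}{x i : i}` of finitely many elements of `L⁰(𝓕,ℝ^d)`. -/
def ConvL0 {ι : Type*} [Fintype ι] (x : ι → L0 μ d) : Set (L0 μ d) :=
  {z | ∃ lam : ι → Ω → ℝ, (∀ i, Measurable (lam i)) ∧ (∀ i ω, lam i ω ∈ Icc (0:ℝ) 1) ∧
    (∀ ω, ∑ i, lam i ω = 1) ∧ ∀ᵐ ω ∂μ, z ω = ∑ i, lam i ω • x i ω}

/-- `x 0, …, x (n-1)` are L⁰-affinely independent. -/
def L0AffineIndep {n : ℕ} [NeZero n] (x : Fin n → L0 μ d) : Prop :=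
  ∀ ξ : Fin n → Ω → ℝ, (∀ i, Measurable (ξ i)) →
    (∀ᵐ ω ∂μ, ∑ i ∈ Finset.univ.erase (0 : Fin n), ξ i ω • (x i ω - x 0 ω) = 0) →
    ∀ i, i ≠ (0 : Fin n) → ∀ᵐ ω ∂μ, ξ i ω = 0

/-- The σ-stable hull of a set `H`. -/
def sigmaHull (H : Set (L0 μ d)) : Set (L0 μ d) :=
  {z | ∃ (A : ℕ → Set Ω) (v : ℕ → L0 μ d), IsPartition A ∧ (∀ k, v k ∈ H) ∧ IsConcat μ A v z}

/-- An L⁰-simplicial subdivision of the L⁰-simplex with vertices `x 0, …, x (n-1)`,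
together with its counterpart simplicial subdivision. -/
structure L0Subdivision {n : ℕ} [NeZero n] (x : Fin n → L0 μ d) where
  I : ℕ
  hI : 0 < I
  T : Fin I → Fin n → L0 μ d
  indepL0 : ∀ i, L0AffineIndep μ d (T i)
  cover : ConvL0 μ d x = sigmaHull μ d (⋃ i, ConvL0 μ d (T i))
  faces : ∀ i j, ConvL0 μ d (T i) ∩ ConvL0 μ d (T j) = ∅ ∨
    ∃ J1 J2 : Finset (Fin n), J1.Nonempty ∧ J2.Nonempty ∧
      ConvL0 μ d (T i) ∩ ConvL0 μ d (T j) = ConvL0 μ d (fun k : J1 => T i k) ∧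
      ConvL0 μ d (T i) ∩ ConvL0 μ d (T j) = ConvL0 μ d (fun k : J2 => T j k)
  indepR : ∀ i, AffineIndependent ℝ (T i)
  cover' : convexHull ℝ (Set.range x) = ⋃ i, convexHull ℝ (Set.range (T i))
  faces' : ∀ i j, convexHull ℝ (Set.range (T i)) ∩ convexHull ℝ (Set.range (T j)) = ∅ ∨
    ∃ J1 J2 : Finset (Fin n), J1.Nonempty ∧ J2.Nonempty ∧
      convexHull ℝ (Set.range (T i)) ∩ convexHull ℝ (Set.range (T j))
        = convexHull ℝ (T i '' J1) ∧
      convexHull ℝ (Set.range (T i)) ∩ convexHull ℝ (Set.range (T j))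
        = convexHull ℝ (T j '' J2)

/-- The set of vertices `ext(𝒮')` of the counterpart subdivision. -/
def L0Subdivision.extVerts {n : ℕ} [NeZero n] {x : Fin n → L0 μ d}
    (S : L0Subdivision μ d x) : Set (L0 μ d) :=
  ⋃ i, Set.range (S.T i)

/-- `φ` is a proper L⁰-labeling function on the domain `D` (w.r.t. the base vertices `x`),
with labels in `{1,…,n}` (label `i+1` corresponding to the vertex `x i`). -/
def ProperL0Label {n : ℕ} [NeZero n] (x : Fin n → L0 μ d) (D : Set (L0 μ d))
    (φ : L0 μ d → (Ω →ₘ[μ] ℕ)) : Prop :=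
  ∀ y ∈ D, ∀ lam : Fin n → Ω → ℝ, (∀ i, Measurable (lam i)) →
    (∀ i ω, lam i ω ∈ Icc (0:ℝ) 1) → (∀ ω, ∑ i, lam i ω = 1) →
    (∀ᵐ ω ∂μ, y ω = ∑ i, lam i ω • x i ω) →
    ∀ i : Fin n, ∀ᵐ ω ∂μ, ¬(φ y ω = (i : ℕ) + 1 ∧ lam i ω = 0)

/-- `ψ` is a (classical) proper labeling function on the vertex set `V` of the counterpart
subdivision, with labels in `{1,…,n}`. -/
def ProperLabelR {n : ℕ} [NeZero n] (x : Fin n → L0 μ d) (V : Set (L0 μ d))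
    (ψ : L0 μ d → ℕ) : Prop :=
  ∀ y ∈ V, ∀ α : Fin n → ℝ, (∀ i, α i ∈ Icc (0:ℝ) 1) → (∑ i, α i = 1) →
    (y = ∑ i, α i • x i) → ∃ i : Fin n, ψ y = (i : ℕ) + 1 ∧ 0 < α i

/-- `h` is an L⁰-extreme point of `S`. -/
def IsL0ExtremePoint (S : Set (L0 μ d)) (h : L0 μ d) : Prop :=
  h ∈ S ∧ ∀ x ∈ S, ∀ y ∈ S, ∀ lam : Ω → ℝ, Measurable lam →
    (∀ᵐ ω ∂μ, lam ω ∈ Ioo (0:ℝ) 1) →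
    (∀ᵐ ω ∂μ, h ω = lam ω • x ω + (1 - lam ω) • y ω) → x = h ∧ y = h

section AuxContinuity

open scoped Classical

/-- Recursively chosen strictly increasing selection satisfying `P`. -/
private noncomputable def seqAux {Ω' : Type*} (P : Ω' → ℕ → Prop)
    (hP : ∀ ω N, ∃ m, N < m ∧ P ω m) : ℕ → Ω' → ℕ
  | 0 => fun ω => Nat.find (hP ω 0)
  | k + 1 => fun ω => Nat.find (hP ω (seqAux P hP k ω))

private lemma seqAux_spec {Ω' : Type*} (P : Ω' → ℕ → Prop)
    (hP : ∀ ω N, ∃ m, N < m ∧ P ω m) (k : ℕ) (ω : Ω') : P ω (seqAux P hP k ω) := by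
  cases k with
  | zero => simp only [seqAux]; exact (Nat.find_spec (hP ω 0)).2
  | succ k => simp only [seqAux]; exact (Nat.find_spec (hP ω _)).2

private lemma seqAux_lt {Ω' : Type*} (P : Ω' → ℕ → Prop)
    (hP : ∀ ω N, ∃ m, N < m ∧ P ω m) (k : ℕ) (ω : Ω') :
    seqAux P hP k ω < seqAux P hP (k + 1) ω := by
  conv_rhs => rw [seqAux]
  exact (Nat.find_spec (hP ω _)).1

private lemma seqAux_measurable {Ω' : Type*} [MeasurableSpace Ω'] {P : Ω' → ℕ → Prop}
    (hP : ∀ ω N, ∃ m, N < m ∧ P ω m) (hm : ∀ m, MeasurableSet {ω | P ω m}) (k : ℕ) :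
    Measurable (seqAux P hP k) := by
  classical
  induction k with
  | zero =>
      simp only [seqAux]
      exact measurable_find (fun ω => hP ω 0) (fun m =>
        ((MeasurableSet.const _).inter (hm m)))
  | succ k ih =>
      simp only [seqAux]
      exact measurable_find (fun ω => hP ω (seqAux P hP k ω)) (fun m =>
        ((ih measurableSet_Iio).inter (hm m)))

/-- `𝒯_{ε,λ}`-closed L⁰-convex sets are σ-stable. -/
private lemma sigmaStable_of_telClosed_L0convex {Ω' : Type*} [MeasurableSpace Ω']
    (μ : Measure Ω') [IsProbabilityMeasure μ] (d : ℕ) (G : Set (L0 μ d))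
    (hcl : TelClosed μ d G) (hconv : L0Convex μ d G) : SigmaStable μ d G := by
  classical
  intro A hA v hv z hz
  obtain ⟨hAm, hAdis, hAun⟩ := hA
  have hex : ∀ ω, ∃ n, ω ∈ A n := fun ω =>
    mem_iUnion.mp (hAun ▸ mem_univ ω)
  set idx : Ω' → ℕ := fun ω => Nat.find (hex ω) with hidx
  have hidxm : Measurable idx := measurable_find hex hAm
  have hidx_mem : ∀ ω, ω ∈ A (idx ω) := fun ω => Nat.find_spec (hex ω)
  have hidx_eq : ∀ ω n, ω ∈ A n → idx ω = n := by
    intro ω n hn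
    by_contra hne
    exact Set.disjoint_left.mp (hAdis hne) (hidx_mem ω) hn
  have hvm : ∀ n, AEStronglyMeasurable (⇑(v n)) μ := fun n => (v n).aestronglyMeasurable
  set fv : ℕ → Ω' → Ed d := fun n => (hvm n).mk _ with hfv
  have hfvm : ∀ n, Measurable (fv n) := fun n => (hvm n).stronglyMeasurable_mk.measurable
  have hfv_eq : ∀ n, ⇑(v n) =ᵐ[μ] fv n := fun n => (hvm n).ae_eq_mk
  set w : ℕ → Ω' → Ed d := fun N ω => if idx ω < N then fv (idx ω) ω else fv 0 ω with hw
  have hwm : ∀ N, Measurable (w N) := by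
    intro N
    have h1 : Measurable fun ω => fv (idx ω) ω := by
      have h2 : Measurable fun p : Ω' × ℕ => fv p.2 p.1 :=
        measurable_from_prod_countable_left fun n => hfvm n
      exact h2.comp (measurable_id.prodMk hidxm)
    exact Measurable.ite (hidxm measurableSet_Iio) h1 (hfvm 0)
  have hWmem : ∀ N, AEEqFun.mk (w N) ((hwm N).aestronglyMeasurable) ∈ G := by
    intro N
    induction N with
    | zero =>
        have heq : AEEqFun.mk (w 0) ((hwm 0).aestronglyMeasurable) = v 0 := by
          rw [← AEEqFun.mk_coeFn (v 0)]
          refine AEEqFun.mk_eq_mk.mpr ?_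
          refine EventuallyEq.trans (ae_of_all μ fun ω => ?_) (hfv_eq 0).symm
          simp [hw]
        rw [heq]; exact hv 0
    | succ N ih =>
        set lam : Ω' → ℝ := fun ω => if ω ∈ A N then 1 else 0 with hlam
        refine hconv (v N) (hv N) (AEEqFun.mk (w N) ((hwm N).aestronglyMeasurable)) ih lam
          (Measurable.ite (hAm N) measurable_const measurable_const)
          (fun ω => by by_cases h : ω ∈ A N <;> simp [hlam, h])
          (AEEqFun.mk (w (N + 1)) ((hwm (N + 1)).aestronglyMeasurable)) ?_
        filter_upwards [AEEqFun.coeFn_mk (w (N + 1)) ((hwm (N + 1)).aestronglyMeasurable),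
          AEEqFun.coeFn_mk (w N) ((hwm N).aestronglyMeasurable), hfv_eq N] with ω h1 h2 h3
        rw [h1, h2]
        by_cases h : ω ∈ A N
        · have hidxN : idx ω = N := hidx_eq ω N h
          have : w (N + 1) ω = fv N ω := by
            simp only [hw, hidxN, Nat.lt_succ_self, if_pos]
          rw [this, ← h3]
          simp [hlam, h]
        · have hidxN : idx ω ≠ N := fun hc => h (hc ▸ hidx_mem ω)
          have : w (N + 1) ω = w N ω := by
            simp only [hw]
            by_cases h' : idx ω < N
            · rw [if_pos (Nat.lt_succ_of_lt h'), if_pos h']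
            · have h'' : ¬ idx ω < N + 1 := by omega
              rw [if_neg h'', if_neg h']
          rw [this]
          simp [hlam, h]
  refine hcl (fun N => AEEqFun.mk (w N) ((hwm N).aestronglyMeasurable)) hWmem z ?_
  refine tendstoInMeasure_of_tendsto_ae (fun N => AEEqFun.aestronglyMeasurable _) ?_
  filter_upwards [ae_all_iff.mpr fun N =>
      AEEqFun.coeFn_mk (w N) ((hwm N).aestronglyMeasurable),
    ae_all_iff.mpr hz, ae_all_iff.mpr hfv_eq] with ω h1 h2 h3
  have hzv : z ω = v (idx ω) ω := h2 (idx ω) (hidx_mem ω)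
  refine Tendsto.congr' ?_ (tendsto_const_nhds (x := z ω))
  filter_upwards [eventually_ge_atTop (idx ω + 1)] with N hN
  have hlt : idx ω < N := hN
  rw [h1 N]
  simp only [hw, if_pos hlt]
  rw [hzv, h3 (idx ω)]

end AuxContinuity

/-- Automatic a.s. sequential continuity of σ-stable
continuous-in-probability maps on `𝒯_{ε,λ}`-closed L⁰-convex sets. -/
theorem auto_as_sequentially_continuous {Ω : Type*} [MeasurableSpace Ω] (μ : Measure Ω)
    [IsProbabilityMeasure μ] (d : ℕ) (hd : 0 < d)
    (G : Set (L0 μ d)) (hne : G.Nonempty) (hcl : TelClosed μ d G) (hconv : L0Convex μ d G)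
    (T : L0 μ d → L0 μ d) (hstab : SigmaStableMapOn μ d G T)
    (hcont : ContInProbOn μ d G T) :
    ∀ x ∈ G, ∀ xs : ℕ → L0 μ d, (∀ k, xs k ∈ G) →
      (∀ᵐ ω ∂μ, Tendsto (fun k => xs k ω) atTop (nhds (x ω))) →
      ∀ᵐ ω ∂μ, Tendsto (fun k => T (xs k) ω) atTop (nhds (T x ω)) := by
  classical
  intro x hx xs hxs hae
  have hGstab : SigmaStable μ d G := sigmaStable_of_telClosed_L0convex μ d G hcl hconv
  have hxsm : ∀ n, AEStronglyMeasurable (⇑(xs n)) μ := fun n => (xs n).aestronglyMeasurable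
  set fxs : ℕ → Ω → Ed d := fun n => (hxsm n).mk _ with hfxs
  have hfxsm : ∀ n, Measurable (fxs n) := fun n => (hxsm n).stronglyMeasurable_mk.measurable
  have hfxs_eq : ∀ n, ⇑(xs n) =ᵐ[μ] fxs n := fun n => (hxsm n).ae_eq_mk
  have hTm : ∀ n, AEStronglyMeasurable (⇑(T (xs n))) μ := fun n => (T (xs n)).aestronglyMeasurable
  set gT : ℕ → Ω → Ed d := fun n => (hTm n).mk _ with hgT
  have hgTm : ∀ n, Measurable (gT n) := fun n => (hTm n).stronglyMeasurable_mk.measurable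
  have hgT_eq : ∀ n, ⇑(T (xs n)) =ᵐ[μ] gT n := fun n => (hTm n).ae_eq_mk
  have hTxm : AEStronglyMeasurable (⇑(T x)) μ := (T x).aestronglyMeasurable
  set g : Ω → Ed d := hTxm.mk _ with hgdef
  have hgm : Measurable g := hTxm.stronglyMeasurable_mk.measurable
  have hg_eq : ⇑(T x) =ᵐ[μ] g := hTxm.ae_eq_mk
  -- Key claim: for every `ε > 0`, the `limsup` of the bad sets is null.
  have key : ∀ ε : ℝ, 0 < ε →
      μ (limsup (fun k => {ω | ε < ‖gT k ω - g ω‖}) atTop) = 0 := by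
    intro ε hε
    by_contra hA0
    set E : ℕ → Set Ω := fun k => {ω | ε < ‖gT k ω - g ω‖} with hE
    have hEm : ∀ k, MeasurableSet (E k) := fun k =>
      measurableSet_lt measurable_const ((hgTm k).sub hgm).norm
    set A : Set Ω := limsup E atTop with hA
    have hAmble : MeasurableSet A := MeasurableSet.measurableSet_limsup hEm
    have hfreq : ∀ ω ∈ A, ∃ᶠ k in atTop, ω ∈ E k := fun ω h =>
      mem_limsup_iff_frequently_mem.mp h
    set P : Ω → ℕ → Prop := fun ω m => ω ∈ A → ε < ‖gT m ω - g ω‖ with hPdef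
    have hPex : ∀ ω N, ∃ m, N < m ∧ P ω m := by
      intro ω N
      by_cases h : ω ∈ A
      · obtain ⟨m, hm1, hm2⟩ := (frequently_atTop.mp (hfreq ω h)) (N + 1)
        exact ⟨m, lt_of_lt_of_le (Nat.lt_succ_self N) hm1, fun _ => hm2⟩
      · exact ⟨N + 1, Nat.lt_succ_self N, fun h' => absurd h' h⟩
    have hPm : ∀ m, MeasurableSet {ω | P ω m} := by
      intro m
      have hset : {ω | P ω m} = Aᶜ ∪ {ω | ε < ‖gT m ω - g ω‖} := by
        ext ω
        simp only [hPdef, Set.mem_setOf_eq, Set.mem_union, Set.mem_compl_iff]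
        tauto
      rw [hset]
      exact hAmble.compl.union (measurableSet_lt measurable_const ((hgTm m).sub hgm).norm)
    set n : ℕ → Ω → ℕ := seqAux P hPex with hn
    have hnm : ∀ k, Measurable (n k) := fun k => seqAux_measurable hPex hPm k
    have hnP : ∀ k ω, P ω (n k ω) := fun k ω => seqAux_spec P hPex k ω
    have hnmono : ∀ ω, StrictMono fun k => n k ω := fun ω =>
      strictMono_nat_of_lt_succ fun k => seqAux_lt P hPex k ω
    have hYm : ∀ k, Measurable fun ω => fxs (n k ω) ω := by
      intro k
      have h2 : Measurable fun p : Ω × ℕ => fxs p.2 p.1 :=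
        measurable_from_prod_countable_left fun m => hfxsm m
      exact h2.comp (measurable_id.prodMk (hnm k))
    set y : ℕ → L0 μ d := fun k =>
      AEEqFun.mk (fun ω => fxs (n k ω) ω) ((hYm k).aestronglyMeasurable) with hy
    set B : ℕ → ℕ → Set Ω := fun k m => {ω | n k ω = m} with hB
    have hBpart : ∀ k, IsPartition (B k) := by
      intro k
      refine ⟨fun m => (hnm k) (measurableSet_singleton m), ?_, ?_⟩
      · intro m1 m2 hne
        rw [Set.disjoint_left]
        intro ω h1 h2
        exact hne (h1 ▸ h2 ▸ rfl)
      · ext ω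
        simp only [hB, mem_iUnion, Set.mem_setOf_eq, mem_univ, iff_true]
        exact ⟨n k ω, rfl⟩
    have hconc : ∀ k, IsConcat μ (B k) xs (y k) := by
      intro k m
      filter_upwards [AEEqFun.coeFn_mk (fun ω => fxs (n k ω) ω)
        ((hYm k).aestronglyMeasurable), hfxs_eq m] with ω h1 h2 hmem
      have hnk : n k ω = m := hmem
      rw [hy]
      simp only
      rw [h1, hnk, ← h2]
    have hyG : ∀ k, y k ∈ G := fun k => hGstab (B k) (hBpart k) xs hxs (y k) (hconc k)
    have hytend : ∀ᵐ ω ∂μ, Tendsto (fun k => y k ω) atTop (nhds (x ω)) := by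
      filter_upwards [ae_all_iff.mpr fun k => AEEqFun.coeFn_mk (fun ω => fxs (n k ω) ω)
        ((hYm k).aestronglyMeasurable), ae_all_iff.mpr hfxs_eq, hae] with ω h1 h2 h3
      have heq : (fun k => y k ω) = fun k => xs (n k ω) ω := by
        funext k
        rw [hy]
        simp only
        rw [h1 k, ← h2 (n k ω)]
      rw [heq]
      exact h3.comp ((hnmono ω).tendsto_atTop)
    have hyTIM : TendstoInMeasure μ (fun k => ⇑(y k)) atTop ⇑x :=
      tendstoInMeasure_of_tendsto_ae (fun k => (y k).aestronglyMeasurable) hytend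
    obtain ⟨ns, hns, hnsae⟩ := (hcont y hyG x hx hyTIM).exists_seq_tendsto_ae
    have hTconc : ∀ k, IsConcat μ (B k) (fun m => T (xs m)) (T (y k)) :=
      fun k => hstab (B k) (hBpart k) xs hxs (y k) (hyG k) (hconc k)
    have hnotA : ∀ᵐ ω ∂μ, ω ∉ A := by
      filter_upwards [hnsae,
        ae_all_iff.mpr fun k => ae_all_iff.mpr fun m => hTconc k m,
        ae_all_iff.mpr hgT_eq, hg_eq] with ω h1 h2 h3 h4 hmem
      have hub : ∀ i, ε < dist (T (y (ns i)) ω) (T x ω) := by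
        intro i
        have hBm : ω ∈ B (ns i) (n (ns i) ω) := rfl
        have e1 : T (y (ns i)) ω = T (xs (n (ns i) ω)) ω := h2 (ns i) (n (ns i) ω) hBm
        have e2 : ⇑(T (xs (n (ns i) ω))) ω = gT (n (ns i) ω) ω := h3 (n (ns i) ω)
        have e3 : ε < ‖gT (n (ns i) ω) ω - g ω‖ := hnP (ns i) ω hmem
        rw [dist_eq_norm, e1, e2, h4]
        exact e3
      obtain ⟨N, hN⟩ := Metric.tendsto_atTop.mp h1 ε hε
      exact absurd (hub N) (not_lt.mpr (hN N le_rfl).le)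
    exact hA0 (measure_eq_zero_iff_ae_notMem.mpr hnotA)
  -- from the key claim, deduce a.e. convergence
  have hnot : ∀ᵐ ω ∂μ, ∀ j : ℕ,
      ω ∉ limsup (fun k => {ω' | 1 / ((j : ℝ) + 1) < ‖gT k ω' - g ω'‖}) atTop := by
    rw [ae_all_iff]
    intro j
    exact measure_eq_zero_iff_ae_notMem.mp (key (1 / ((j : ℝ) + 1)) (by positivity))
  filter_upwards [hnot, ae_all_iff.mpr hgT_eq, hg_eq] with ω h1 h2 h3
  have hgt : Tendsto (fun k => gT k ω) atTop (nhds (g ω)) := by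
    rw [Metric.tendsto_atTop]
    intro ε hε
    obtain ⟨j, hj⟩ := exists_nat_one_div_lt hε
    have h5 : ∀ᶠ k in atTop, ¬ (1 / ((j : ℝ) + 1) < ‖gT k ω - g ω‖) :=
      not_frequently.mp (fun hf => (h1 j) (mem_limsup_iff_frequently_mem.mpr hf))
    obtain ⟨N, hN⟩ := eventually_atTop.mp h5
    refine ⟨N, fun k hk => ?_⟩
    rw [dist_eq_norm]
    exact lt_of_le_of_lt (not_lt.mp (hN k hk)) hj
  rw [show (T x) ω = g ω from h3]
  exact hgt.congr fun k => (h2 k).symm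
end RandomBrouwer
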